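/- arXiv:1601.01911 — 2 statements merged into one kernel-verified Lean document; each statement's English description precedes it below -/
import Mathlib

section
/- For every r ∈ ℝ, (1/(2π)) ∫₀^{2π} cos(r sin t) dt = J₀(r). -/
open MeasureTheory intervalIntegral

/-- Bessel function of the first kind of order 0, defined by its power series. -/
noncomputable def J0 (r : ℝ) : ℝ :=
  ∑' k : ℕ, (-1 : ℝ) ^ k / ((Nat.factorial k : ℝ)) ^ 2 * (r / 2) ^ (2 * k)

open Real in
lemma J0_aux_prod (k : ℕ) : (∏ i ∈ Finset.range k, ((2 * (i:ℝ) + 1) / (2 * i + 2)))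
    = (Nat.factorial (2*k) : ℝ) / (4 ^ k * ((Nat.factorial k : ℝ))^2) := by
  induction k with
  | zero => simp
  | succ n ih =>
    rw [Finset.prod_range_succ, ih]
    have h1 : (Nat.factorial (2*(n+1)) : ℝ) = (2*n+2) * ((2*n+1) * Nat.factorial (2*n)) := by
      have : 2*(n+1) = (2*n+1)+1 := by ring
      rw [this, Nat.factorial_succ]
      push_cast [Nat.factorial_succ]
      ring
    rw [h1]
    have h2 : (Nat.factorial (n+1) : ℝ) = (n+1) * Nat.factorial n := by
      push_cast [Nat.factorial_succ]; ring
    rw [h2]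
    have hf : (Nat.factorial n : ℝ) ≠ 0 := Nat.cast_ne_zero.mpr n.factorial_ne_zero
    have h4 : (4:ℝ)^n ≠ 0 := by positivity
    field_simp
    ring

open Real in
lemma J0_aux_sinpow (k : ℕ) : (∫ t in (0:ℝ)..(2*π), Real.sin t ^ (2*k))
    = 2 * π * ((Nat.factorial (2*k) : ℝ) / (4 ^ k * ((Nat.factorial k : ℝ))^2)) := by
  have hper : Function.Periodic (fun t => Real.sin t ^ (2*k)) π := by
    intro x
    simp only [Real.sin_add_pi]
    exact (Even.neg_pow ⟨k, by ring⟩ _)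
  have hint : ∀ a b : ℝ, IntervalIntegrable (fun t => Real.sin t ^ (2*k)) volume a b :=
    fun a b => (Real.continuous_sin.pow _).intervalIntegrable a b
  have hsplit : (∫ t in (0:ℝ)..(2*π), Real.sin t ^ (2*k))
      = (∫ t in (0:ℝ)..π, Real.sin t ^ (2*k)) + ∫ t in π..(2*π), Real.sin t ^ (2*k) :=
    (intervalIntegral.integral_add_adjacent_intervals (hint 0 π) (hint π (2*π))).symm
  have h2 : (∫ t in π..(2*π), Real.sin t ^ (2*k)) = ∫ t in (0:ℝ)..π, Real.sin t ^ (2*k) := by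
    have := hper.intervalIntegral_add_eq π 0
    simpa [two_mul] using this
  rw [hsplit, h2, integral_sin_pow_even, J0_aux_prod]
  ring

open Real in
theorem integral_cos_sin_eq_J0 (r : ℝ) :
    (1 / (2 * Real.pi)) * ∫ t in (0 : ℝ)..(2 * Real.pi), Real.cos (r * Real.sin t) = J0 r := by
  have h02 : (0:ℝ) ≤ 2*π := by positivity
  set μ : Measure ℝ := volume.restrict (Set.Ioc 0 (2*π)) with hμ
  set F : ℕ → ℝ → ℝ := fun k t => (-1:ℝ)^k * (r * Real.sin t)^(2*k) / (Nat.factorial (2*k)) with hF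
  have hcont : ∀ k, Continuous (F k) := fun k =>
    Continuous.div_const (continuous_const.mul
      ((continuous_const.mul Real.continuous_sin).pow (2*k))) _
  have hF_int : ∀ k, Integrable (F k) μ := fun k =>
    (hcont k).integrableOn_Ioc
  have hμfin : (μ Set.univ).toReal = 2*π := by
    rw [hμ, Measure.restrict_apply_univ, Real.volume_Ioc, sub_zero,
      ENNReal.toReal_ofReal (by positivity)]
  have hbound : ∀ k t, ‖F k t‖ ≤ |r|^(2*k) / (Nat.factorial (2*k)) := by
    intro k t
    have h1 : |r * Real.sin t| ≤ |r| := by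
      rw [abs_mul]
      exact mul_le_of_le_one_right (abs_nonneg r) (Real.abs_sin_le_one t)
    have h2 : ‖F k t‖ = |r * Real.sin t|^(2*k) / (Nat.factorial (2*k)) := by
      rw [hF, Real.norm_eq_abs, abs_div, abs_mul, abs_pow, abs_pow, abs_neg, abs_one,
        one_pow, one_mul, Nat.abs_cast]
    rw [h2]
    gcongr
  have hsum0 : Summable (fun k : ℕ => |r|^(2*k) / (Nat.factorial (2*k) : ℝ)) := by
    refine Summable.of_nonneg_of_le (f := fun k => (r^2)^k / (Nat.factorial k : ℝ))
      (fun k => by positivity) (fun k => ?_) (Real.summable_pow_div_factorial (r^2))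
    rw [pow_mul, sq_abs]
    exact div_le_div_of_nonneg_left (by positivity)
      (by exact_mod_cast Nat.factorial_pos k)
      (by exact_mod_cast Nat.factorial_le (by omega : k ≤ 2*k))
  have hF_sum : Summable (fun k => ∫ a, ‖F k a‖ ∂μ) := by
    refine Summable.of_nonneg_of_le
      (f := fun k => (2*π) * (|r|^(2*k) / (Nat.factorial (2*k) : ℝ)))
      (fun k => integral_nonneg (fun a => norm_nonneg _)) (fun k => ?_) (hsum0.mul_left _)
    calc ∫ a, ‖F k a‖ ∂μ ≤ ∫ _, |r|^(2*k) / (Nat.factorial (2*k) : ℝ) ∂μ :=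
          integral_mono (hF_int k).norm (integrable_const _) (hbound k)
      _ = (2*π) * (|r|^(2*k) / (Nat.factorial (2*k) : ℝ)) := by
          rw [MeasureTheory.integral_const, Measure.real, hμfin, smul_eq_mul]
  have hswap : ∑' k, (∫ a, F k a ∂μ) = ∫ a, Real.cos (r * Real.sin a) ∂μ := by
    rw [integral_tsum_of_summable_integral_norm hF_int hF_sum]
    apply MeasureTheory.integral_congr_ae
    filter_upwards with a
    exact (Real.hasSum_cos (r * Real.sin a)).tsum_eq
  have hterm : ∀ k, (∫ a, F k a ∂μ)
      = (2*π) * ((-1:ℝ)^k / ((Nat.factorial k : ℝ))^2 * (r/2)^(2*k)) := by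
    intro k
    have e1 : (∫ a, F k a ∂μ) = ∫ t in (0:ℝ)..(2*π), F k t :=
      (intervalIntegral.integral_of_le h02).symm
    have e2 : ∀ t, F k t = ((-1:ℝ)^k * r^(2*k) / (Nat.factorial (2*k)))
        * Real.sin t ^ (2*k) := by
      intro t
      rw [hF]
      simp only [mul_pow]
      ring
    rw [e1]
    simp_rw [e2]
    rw [intervalIntegral.integral_const_mul, J0_aux_sinpow]
    have hf2 : ((Nat.factorial (2*k) : ℝ)) ≠ 0 := Nat.cast_ne_zero.mpr (2*k).factorial_ne_zero
    have hfk : ((Nat.factorial k : ℝ)) ≠ 0 := Nat.cast_ne_zero.mpr k.factorial_ne_zero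
    have h4 : (4:ℝ)^k ≠ 0 := by positivity
    have hr : (r/2)^(2*k) = r^(2*k) / 4^k := by
      rw [div_pow]
      congr 1
      rw [pow_mul]
      norm_num
    rw [hr]
    field_simp
  have hiv : (∫ t in (0 : ℝ)..(2 * π), Real.cos (r * Real.sin t))
      = ∫ a, Real.cos (r * Real.sin a) ∂μ := intervalIntegral.integral_of_le h02
  have hfinal : (∫ t in (0 : ℝ)..(2 * π), Real.cos (r * Real.sin t)) = (2*π) * J0 r := by
    rw [hiv, ← hswap]
    simp_rw [hterm]
    rw [tsum_mul_left, J0]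
  rw [hfinal]
  have hπ : (2*π) ≠ 0 := by positivity
  field_simp
end

section
/- Fix ω ∈ ℝ and x, z ∈ ℝ² with x ≠ z, write a = (x − z)/‖x − z‖ ∈ ℝ² and ρ = ω‖x − z‖, and define the complex-valued function P on [0, 2π] by P(t) = exp(i ω (x₁ cos t + x₂ sin t)) − [ J₀(ρ) + 2 i J₁(ρ) (a₁ cos t + a₂ sin t) ] · exp(i ω (z₁ cos t + z₂ sin t)). Then (1/(2π)) ∫₀^{2π} |P(t)|² dt = 1 − J₀(ρ)² − 2 J₁(ρ)². (This is the continuous, single-inhomogeneity form of the squared norm of the noise-space projection |P_noise(f(x))|² arising in the MUSIC imaging function: P equals the test function f(x) minus its orthogonal projection onto the span of the three signal-space functions associated with the inhomogeneity at z.) -/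
open MeasureTheory intervalIntegral

/-- Bessel function of the first kind of order 1, defined by its power series. -/
noncomputable def J1 (r : ℝ) : ℝ :=
  ∑' k : ℕ, (-1 : ℝ) ^ k / ((Nat.factorial k : ℝ) * (Nat.factorial (k + 1) : ℝ)) *
    (r / 2) ^ (2 * k + 1)

open Real

lemma cos_pow_even (k : ℕ) :
    ∫ t in (0:ℝ)..(2*π), Real.cos t ^ (2*k)
      = 2*π * ((2*k).factorial / ((k.factorial:ℝ)^2 * 4^k)) := by
  induction k with
  | zero => simp
  | succ k ih =>
    have h2 : 2*(k+1) = 2*k + 2 := by ring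
    rw [h2, integral_cos_pow, ih]
    have h0 : Real.sin (2*π) = 0 := by simp [Real.sin_two_pi]
    rw [h0]
    simp only [Real.sin_zero, Real.cos_zero]
    have hf1 : ((2*k+2).factorial : ℝ) = (2*(k:ℝ)+2) * ((2*(k:ℝ)+1) * (2*k).factorial) := by
      have : 2*k+2 = (2*k+1) + 1 := by ring
      rw [this, Nat.factorial_succ, Nat.factorial_succ]
      push_cast; ring
    have hf2 : ((k+1).factorial : ℝ) = (k+1) * k.factorial := by
      rw [Nat.factorial_succ]; push_cast; ring
    rw [hf1, hf2]
    have hk : (k.factorial : ℝ) ≠ 0 := Nat.cast_ne_zero.2 k.factorial_ne_zero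
    have h4 : (4:ℝ)^k ≠ 0 := by positivity
    have hk1 : (k:ℝ)+1 ≠ 0 := by positivity
    field_simp
    push_cast
    ring

lemma cos_pow_odd (k : ℕ) :
    ∫ t in (0:ℝ)..(2*π), Real.cos t ^ (2*k+1) = 0 := by
  induction k with
  | zero => simp [Real.sin_two_pi]
  | succ k ih =>
    have h2 : 2*(k+1)+1 = (2*k+1) + 2 := by ring
    rw [h2, integral_cos_pow, ih]
    simp [Real.sin_two_pi]

lemma exp_tsum (z : ℂ) : Complex.exp z = ∑' k : ℕ, z ^ k / k.factorial := by
  rw [Complex.exp_eq_exp_ℂ, NormedSpace.exp_eq_tsum_div]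

lemma term_integrable (ρ : ℝ) (g : ℝ → ℝ) (hg : Continuous g) (k : ℕ) :
    IntegrableOn (fun t => (((ρ * Real.cos t : ℝ):ℂ) * Complex.I) ^ k / k.factorial
        * ((g t : ℝ):ℂ)) (Set.Ioc 0 (2*π)) volume := by
  apply Continuous.integrableOn_Ioc
  fun_prop

lemma term_norm (ρ : ℝ) (k p : ℕ) (t : ℝ) :
    ‖(((ρ * Real.cos t : ℝ):ℂ) * Complex.I) ^ k / k.factorial * ((Real.cos t : ℝ):ℂ) ^ p‖
      ≤ |ρ| ^ k / k.factorial := by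
  have h1 : ‖(((ρ * Real.cos t : ℝ):ℂ) * Complex.I)‖ = |ρ * Real.cos t| := by
    rw [norm_mul, Complex.norm_I, mul_one, Complex.norm_real, Real.norm_eq_abs]
  have h4 : ‖((Real.cos t : ℝ):ℂ) ^ p‖ ≤ 1 := by
    rw [norm_pow, Complex.norm_real, Real.norm_eq_abs]
    exact pow_le_one₀ (abs_nonneg _) (Real.abs_cos_le_one t)
  calc ‖(((ρ * Real.cos t : ℝ):ℂ) * Complex.I) ^ k / k.factorial * ((Real.cos t : ℝ):ℂ) ^ p‖
      = ‖(((ρ * Real.cos t : ℝ):ℂ) * Complex.I) ^ k / k.factorial‖ * ‖((Real.cos t : ℝ):ℂ) ^ p‖ :=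
        norm_mul _ _
    _ ≤ ‖(((ρ * Real.cos t : ℝ):ℂ) * Complex.I) ^ k / k.factorial‖ * 1 := by
        gcongr
    _ = ‖(((ρ * Real.cos t : ℝ):ℂ) * Complex.I) ^ k / k.factorial‖ := mul_one _
    _ ≤ |ρ| ^ k / k.factorial := ?_
  simp only [norm_div, norm_pow, h1, Complex.norm_natCast]
  have h2 : |ρ * Real.cos t| ≤ |ρ| := by
    calc |ρ * Real.cos t| = |ρ| * |Real.cos t| := abs_mul _ _
      _ ≤ |ρ| * 1 := by gcongr; exact Real.abs_cos_le_one t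
      _ = |ρ| := mul_one _
  gcongr

lemma series_int (ρ : ℝ) (p : ℕ) :
    ∫ t in Set.Ioc (0:ℝ) (2*π),
        (∑' k : ℕ, (((ρ * Real.cos t : ℝ):ℂ) * Complex.I) ^ k / k.factorial
          * ((Real.cos t : ℝ):ℂ) ^ p)
      = ∑' k : ℕ, ((ρ:ℂ) * Complex.I) ^ k / k.factorial
          * ((∫ t in (0:ℝ)..(2*π), Real.cos t ^ (k+p) : ℝ) : ℂ) := by
  have hInt : ∀ k : ℕ, Integrable (fun t => (((ρ * Real.cos t : ℝ):ℂ) * Complex.I) ^ k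
      / k.factorial * ((Real.cos t : ℝ):ℂ) ^ p) (volume.restrict (Set.Ioc 0 (2*π))) := by
    intro k
    apply Continuous.integrableOn_Ioc
    fun_prop
  have hSum : Summable fun k : ℕ => ∫ t in Set.Ioc (0:ℝ) (2*π),
      ‖(((ρ * Real.cos t : ℝ):ℂ) * Complex.I) ^ k / k.factorial
        * ((Real.cos t : ℝ):ℂ) ^ p‖ := by
    apply Summable.of_nonneg_of_le
      (fun k => integral_nonneg (fun t => norm_nonneg _))
      (fun k => ?_)
      (((Real.summable_pow_div_factorial |ρ|).mul_left (2*π)))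
    calc (∫ t in Set.Ioc (0:ℝ) (2*π), ‖(((ρ * Real.cos t : ℝ):ℂ) * Complex.I) ^ k / k.factorial
          * ((Real.cos t : ℝ):ℂ) ^ p‖)
        ≤ ∫ _t in Set.Ioc (0:ℝ) (2*π), (|ρ| ^ k / k.factorial) := by
          have hvol : volume (Set.Ioc (0:ℝ) (2*π)) < ⊤ := by
            rw [Real.volume_Ioc]; exact ENNReal.ofReal_lt_top
          exact setIntegral_mono_on ((hInt k).norm) (integrableOn_const hvol.ne)
            measurableSet_Ioc (fun t _ => term_norm ρ k p t)
      _ = 2*π * (|ρ| ^ k / k.factorial) := by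
          rw [setIntegral_const, Real.volume_real_Ioc_of_le (by positivity), sub_zero,
            smul_eq_mul]
  rw [← integral_tsum_of_summable_integral_norm hInt hSum]
  congr 1
  funext k
  have : ∀ t : ℝ, (((ρ * Real.cos t : ℝ):ℂ) * Complex.I) ^ k / k.factorial
      * ((Real.cos t : ℝ):ℂ) ^ p
      = ((ρ:ℂ) * Complex.I) ^ k / k.factorial * ((Real.cos t ^ (k+p) : ℝ):ℂ) := by
    intro t
    push_cast
    ring
  simp_rw [this]
  rw [MeasureTheory.integral_const_mul]
  congr 1
  rw [← intervalIntegral.integral_of_le (by positivity : (0:ℝ) ≤ 2*π)]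
  exact intervalIntegral.integral_ofReal

lemma J0_summand_summable (ρ : ℝ) :
    Summable (fun m : ℕ => (-1:ℝ)^m / (m.factorial:ℝ)^2 * (ρ/2)^(2*m)) := by
  apply Summable.of_norm_bounded (Real.summable_pow_div_factorial ((ρ/2)^2))
  intro m
  have hq : (0:ℝ) ≤ ((ρ/2)^2)^m := by positivity
  have hfac : (1:ℝ) ≤ (m.factorial:ℝ) := Nat.one_le_cast.2 m.factorial_pos
  have habs : |(-1:ℝ)^m / (m.factorial:ℝ)^2 * ((ρ/2)^2)^m|
      = ((ρ/2)^2)^m / (m.factorial:ℝ)^2 := by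
    rw [abs_mul, abs_div, abs_pow (-1:ℝ) m, abs_neg, abs_one, one_pow, abs_of_nonneg hq,
      abs_of_nonneg (by positivity : (0:ℝ) ≤ ((m.factorial:ℝ))^2)]
    ring
  rw [pow_mul, Real.norm_eq_abs, habs, div_le_div_iff₀ (by positivity) (by positivity)]
  have hF2 : (m.factorial:ℝ) ≤ (m.factorial:ℝ)^2 := by nlinarith
  nlinarith [mul_le_mul_of_nonneg_left hF2 hq]

lemma besselJ0_integral (ρ : ℝ) :
    ∫ t in (0:ℝ)..(2*π), Complex.exp (((ρ * Real.cos t : ℝ):ℂ) * Complex.I)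
      = ((2*π * J0 ρ : ℝ):ℂ) := by
  rw [intervalIntegral.integral_of_le (by positivity : (0:ℝ) ≤ 2*π)]
  have h1 : ∀ t:ℝ, Complex.exp (((ρ * Real.cos t : ℝ):ℂ) * Complex.I)
      = ∑' k : ℕ, (((ρ * Real.cos t : ℝ):ℂ) * Complex.I) ^ k / k.factorial
          * ((Real.cos t:ℝ):ℂ) ^ 0 := by
    intro t; simp only [pow_zero, mul_one]; exact exp_tsum _
  simp_rw [h1]
  rw [series_int ρ 0]
  set f : ℕ → ℂ := fun k => ((ρ:ℂ) * Complex.I) ^ k / k.factorial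
      * ((∫ t in (0:ℝ)..(2*π), Real.cos t ^ (k+0) : ℝ) : ℂ) with hf
  set g : ℕ → ℝ := fun m => 2*π * ((-1:ℝ)^m / (m.factorial:ℝ)^2 * (ρ/2)^(2*m)) with hg
  have heven : ∀ m : ℕ, f (2*m) = ((g m : ℝ):ℂ) := by
    intro m
    have e1 : ((ρ:ℂ) * Complex.I)^(2*m) = (-1)^m * (ρ:ℂ)^(2*m) := by
      rw [pow_mul]
      have : ((ρ:ℂ)*Complex.I)^2 = -((ρ:ℂ)^2) := by rw [mul_pow, Complex.I_sq]; ring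
      rw [this, neg_pow, ← pow_mul]
    have e3 : (2*m+0 : ℕ) = 2*m := by ring
    simp only [hf, hg, e3, e1, cos_pow_even m]
    have e2 : ((ρ:ℂ)/2)^(2*m) = (ρ:ℂ)^(2*m) / 4^m := by
      rw [div_pow, pow_mul, pow_mul]
      norm_num
    push_cast
    rw [e2]
    have h1 : ((2*m).factorial:ℂ) ≠ 0 := Nat.cast_ne_zero.2 (2*m).factorial_ne_zero
    have h2 : ((m).factorial:ℂ) ≠ 0 := Nat.cast_ne_zero.2 m.factorial_ne_zero
    have h3 : ((4:ℂ))^m ≠ 0 := by norm_num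
    field_simp
  have hodd : ∀ m : ℕ, f (2*m+1) = 0 := by
    intro m
    have e3 : (2*m+1+0 : ℕ) = 2*m+1 := by ring
    simp only [hf, e3, cos_pow_odd m]
    simp
  have hgs : Summable g := (J0_summand_summable ρ).mul_left (2*π)
  have hse : Summable (fun m => f (2*m)) := by
    simp_rw [heven]; exact Complex.summable_ofReal.2 hgs
  have hso : Summable (fun m => f (2*m+1)) := by
    simp_rw [hodd]; exact summable_zero
  rw [← tsum_even_add_odd hse hso]
  simp_rw [heven, hodd]
  rw [tsum_zero, add_zero, ← Complex.ofReal_tsum]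
  norm_cast
  simp only [hg]
  rw [tsum_mul_left]
  rfl

lemma J1_summand_summable (ρ : ℝ) :
    Summable (fun m : ℕ => (-1:ℝ)^m / ((m.factorial:ℝ) * ((m+1).factorial:ℝ))
      * (ρ/2)^(2*m+1)) := by
  apply Summable.of_norm_bounded (((Real.summable_pow_div_factorial ((ρ/2)^2)).mul_left |ρ/2|))
  intro m
  have hq : (0:ℝ) ≤ ((ρ/2)^2)^m := by positivity
  have hfac1 : (1:ℝ) ≤ ((m+1).factorial:ℝ) := Nat.one_le_cast.2 (m+1).factorial_pos
  have hF : (0:ℝ) < (m.factorial:ℝ) := by exact_mod_cast m.factorial_pos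
  have hpow : (ρ/2)^(2*m+1) = (ρ/2) * ((ρ/2)^2)^m := by rw [pow_succ, pow_mul]; ring
  have habs : |(-1:ℝ)^m / ((m.factorial:ℝ) * ((m+1).factorial:ℝ)) * (ρ/2)^(2*m+1)|
      = |ρ/2| * ((ρ/2)^2)^m / ((m.factorial:ℝ) * ((m+1).factorial:ℝ)) := by
    simp only [hpow, abs_mul, abs_div, abs_pow (-1:ℝ) m, abs_neg, abs_one, one_pow, one_div,
      Nat.abs_cast, abs_of_nonneg hq]
    ring
  rw [Real.norm_eq_abs, habs, div_le_iff₀ (by positivity)]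
  have h1 : (0:ℝ) ≤ |ρ/2| * ((ρ/2)^2)^m := by positivity
  have e : |ρ/2| * (((ρ/2)^2)^m / (m.factorial:ℝ)) * ((m.factorial:ℝ) * ((m+1).factorial:ℝ))
      = |ρ/2| * ((ρ/2)^2)^m * ((m+1).factorial:ℝ) := by
    field_simp
  rw [e]
  exact le_mul_of_one_le_right h1 hfac1

lemma besselJ1_integral (ρ : ℝ) :
    ∫ t in (0:ℝ)..(2*π), ((Real.cos t : ℝ):ℂ) * Complex.exp (((ρ * Real.cos t : ℝ):ℂ) * Complex.I)
      = ((2*π * J1 ρ : ℝ):ℂ) * Complex.I := by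
  rw [intervalIntegral.integral_of_le (by positivity : (0:ℝ) ≤ 2*π)]
  have h1 : ∀ t:ℝ, ((Real.cos t : ℝ):ℂ) * Complex.exp (((ρ * Real.cos t : ℝ):ℂ) * Complex.I)
      = ∑' k : ℕ, (((ρ * Real.cos t : ℝ):ℂ) * Complex.I) ^ k / k.factorial
          * ((Real.cos t:ℝ):ℂ) ^ 1 := by
    intro t
    rw [exp_tsum, ← tsum_mul_left]
    exact tsum_congr fun k => by ring
  simp_rw [h1]
  rw [series_int ρ 1]
  set f : ℕ → ℂ := fun k => ((ρ:ℂ) * Complex.I) ^ k / k.factorial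
      * ((∫ t in (0:ℝ)..(2*π), Real.cos t ^ (k+1) : ℝ) : ℂ) with hf
  set g : ℕ → ℝ := fun m => 2*π * ((-1:ℝ)^m / ((m.factorial:ℝ) * ((m+1).factorial:ℝ))
      * (ρ/2)^(2*m+1)) with hg
  have heven : ∀ m : ℕ, f (2*m) = 0 := by
    intro m
    simp only [hf, cos_pow_odd m]
    simp
  have hodd : ∀ m : ℕ, f (2*m+1) = ((g m : ℝ):ℂ) * Complex.I := by
    intro m
    have e3 : (2*m+1+1 : ℕ) = 2*(m+1) := by ring
    have e1 : ((ρ:ℂ) * Complex.I)^(2*m+1) = (-1)^m * (ρ:ℂ)^(2*m+1) * Complex.I := by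
      rw [pow_succ, pow_mul]
      have h2 : ((ρ:ℂ)*Complex.I)^2 = -((ρ:ℂ)^2) := by rw [mul_pow, Complex.I_sq]; ring
      rw [h2, neg_pow, ← pow_mul, pow_succ]
      ring
    simp only [hf, hg, e3, e1, cos_pow_even (m+1)]
    have e2 : ((ρ:ℂ)/2)^(2*m+1) = (ρ:ℂ)^(2*m+1) / (2 * 4^m) := by
      have h2 : (2:ℂ)^(2*m+1) = 2 * 4^m := by
        rw [pow_succ, pow_mul]; norm_num [mul_comm]
      rw [div_pow, h2]
    push_cast
    rw [e2]
    have hf1 : ((2*(m+1)).factorial:ℂ) = (2*(m:ℂ)+2) * ((2*m+1).factorial:ℂ) := by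
      have : 2*(m+1) = (2*m+1) + 1 := by ring
      rw [this, Nat.factorial_succ]
      push_cast
      ring
    have hf2 : (((m+1)).factorial:ℂ) = ((m:ℂ)+1) * (m.factorial:ℂ) := by
      rw [Nat.factorial_succ]; push_cast; ring
    rw [hf1, hf2]
    have h1 : ((2*m+1).factorial:ℂ) ≠ 0 := Nat.cast_ne_zero.2 (2*m+1).factorial_ne_zero
    have h2 : ((m).factorial:ℂ) ≠ 0 := Nat.cast_ne_zero.2 m.factorial_ne_zero
    have h3 : ((4:ℂ))^m ≠ 0 := by norm_num
    have h4 : ((m:ℂ)+1) ≠ 0 := by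
      intro hc
      have := congrArg Complex.re hc
      push_cast at this
      norm_num at this
      nlinarith [this, (Nat.cast_nonneg m : (0:ℝ) ≤ m)]
    field_simp
    ring
  have hgs : Summable g := (J1_summand_summable ρ).mul_left (2*π)
  have hse : Summable (fun m => f (2*m)) := by
    simp_rw [heven]; exact summable_zero
  have hso : Summable (fun m => f (2*m+1)) := by
    simp_rw [hodd]
    exact ((Complex.summable_ofReal.2 hgs).mul_right Complex.I)
  rw [← tsum_even_add_odd hse hso]
  simp_rw [heven, hodd]
  rw [tsum_zero, zero_add, tsum_mul_right, ← Complex.ofReal_tsum]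
  norm_cast
  simp only [hg]
  rw [tsum_mul_left]
  rfl

lemma cos_part (ρ : ℝ) :
    (∫ t in (0:ℝ)..(2*π), Real.cos (ρ * Real.cos t)) = 2*π * J0 ρ := by
  have hA := besselJ0_integral ρ
  have hrw : ∀ t:ℝ, Complex.exp (((ρ * Real.cos t : ℝ):ℂ) * Complex.I)
      = ((Real.cos (ρ * Real.cos t) : ℝ):ℂ) + ((Real.sin (ρ * Real.cos t) : ℝ):ℂ) * Complex.I := by
    intro t
    rw [Complex.exp_mul_I, ← Complex.ofReal_cos, ← Complex.ofReal_sin]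
  simp_rw [hrw] at hA
  rw [intervalIntegral.integral_add
      ((Continuous.intervalIntegrable (by fun_prop) _ _))
      ((Continuous.intervalIntegrable (by fun_prop) _ _)),
    intervalIntegral.integral_mul_const, intervalIntegral.integral_ofReal,
    intervalIntegral.integral_ofReal] at hA
  have := congrArg Complex.re hA
  simpa using this

lemma sin_part (ρ : ℝ) :
    (∫ t in (0:ℝ)..(2*π), Real.cos t * Real.sin (ρ * Real.cos t)) = 2*π * J1 ρ := by
  have hB := besselJ1_integral ρ
  have hrw : ∀ t:ℝ, ((Real.cos t : ℝ):ℂ) * Complex.exp (((ρ * Real.cos t : ℝ):ℂ) * Complex.I)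
      = ((Real.cos t * Real.cos (ρ * Real.cos t) : ℝ):ℂ)
        + ((Real.cos t * Real.sin (ρ * Real.cos t) : ℝ):ℂ) * Complex.I := by
    intro t
    rw [Complex.exp_mul_I, ← Complex.ofReal_cos, ← Complex.ofReal_sin]
    push_cast
    ring
  simp_rw [hrw] at hB
  rw [intervalIntegral.integral_add
      ((Continuous.intervalIntegrable (by fun_prop) _ _))
      ((Continuous.intervalIntegrable (by fun_prop) _ _)),
    intervalIntegral.integral_mul_const, intervalIntegral.integral_ofReal,
    intervalIntegral.integral_ofReal] at hB
  have := congrArg Complex.im hB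
  simpa using this

lemma pointwise_sq (J0v J1v ω x1 x2 z1 z2 nrm a1 a2 : ℝ)
    (h1 : nrm * a1 = x1 - z1) (h2 : nrm * a2 = x2 - z2) (t : ℝ) :
    (‖
      (Complex.exp (Complex.I * (ω : ℂ) * ((x1 * Real.cos t + x2 * Real.sin t : ℝ) : ℂ)) -
        (((J0v : ℝ) : ℂ) +
            2 * Complex.I * ((J1v : ℝ) : ℂ) * ((a1 * Real.cos t + a2 * Real.sin t : ℝ) : ℂ)) *
          Complex.exp (Complex.I * (ω : ℂ) * ((z1 * Real.cos t + z2 * Real.sin t : ℝ) : ℂ)))‖) ^ 2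
    = 1 + J0v^2 + 4*J1v^2*(a1 * Real.cos t + a2 * Real.sin t)^2
      - 2*J0v*Real.cos ((ω*nrm)*(a1 * Real.cos t + a2 * Real.sin t))
      - 4*J1v*(a1 * Real.cos t + a2 * Real.sin t)
          * Real.sin ((ω*nrm)*(a1 * Real.cos t + a2 * Real.sin t)) := by
  set s : ℝ := a1 * Real.cos t + a2 * Real.sin t with hs
  set r : ℝ := (ω*nrm) * s with hr
  have hx : ω * (x1 * Real.cos t + x2 * Real.sin t)
      = ω * (z1 * Real.cos t + z2 * Real.sin t) + r := by
    rw [hr, hs]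
    linear_combination (- ω * Real.cos t) * h1 + (- ω * Real.sin t) * h2
  have hxc : Complex.I * (ω : ℂ) * ((x1 * Real.cos t + x2 * Real.sin t : ℝ) : ℂ)
      = Complex.I * (ω : ℂ) * ((z1 * Real.cos t + z2 * Real.sin t : ℝ) : ℂ) + (r:ℂ) * Complex.I := by
    have hxcc : (ω:ℂ) * ((x1 * Real.cos t + x2 * Real.sin t : ℝ) : ℂ)
        = (ω:ℂ) * ((z1 * Real.cos t + z2 * Real.sin t : ℝ) : ℂ) + (r:ℂ) := by
      exact_mod_cast congrArg (fun y : ℝ => (y:ℂ)) hx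
    linear_combination Complex.I * hxcc
  rw [hxc, Complex.exp_add]
  have hfactor : Complex.exp (Complex.I * (ω : ℂ) * ((z1 * Real.cos t + z2 * Real.sin t : ℝ) : ℂ)) *
          Complex.exp ((r:ℂ) * Complex.I) -
        (((J0v : ℝ) : ℂ) + 2 * Complex.I * ((J1v : ℝ) : ℂ) * ((s : ℝ) : ℂ)) *
          Complex.exp (Complex.I * (ω : ℂ) * ((z1 * Real.cos t + z2 * Real.sin t : ℝ) : ℂ))
      = Complex.exp (Complex.I * (ω : ℂ) * ((z1 * Real.cos t + z2 * Real.sin t : ℝ) : ℂ)) *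
          (Complex.exp ((r:ℂ) * Complex.I) -
            (((J0v : ℝ) : ℂ) + 2 * Complex.I * ((J1v : ℝ) : ℂ) * ((s : ℝ) : ℂ))) := by
    ring
  rw [hfactor, norm_mul, Complex.norm_exp]
  have hre : (Complex.I * (ω : ℂ) * ((z1 * Real.cos t + z2 * Real.sin t : ℝ) : ℂ)).re = 0 := by
    simp [Complex.mul_re]
  rw [hre, Real.exp_zero, one_mul, Complex.sq_norm, Complex.normSq_apply]
  have hre2 : (Complex.exp ((r:ℂ) * Complex.I) -
      (((J0v : ℝ) : ℂ) + 2 * Complex.I * ((J1v : ℝ) : ℂ) * ((s : ℝ) : ℂ))).re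
      = Real.cos r - J0v := by
    simp [Complex.exp_ofReal_mul_I_re]
  have him2 : (Complex.exp ((r:ℂ) * Complex.I) -
      (((J0v : ℝ) : ℂ) + 2 * Complex.I * ((J1v : ℝ) : ℂ) * ((s : ℝ) : ℂ))).im
      = Real.sin r - 2 * J1v * s := by
    simp [Complex.exp_ofReal_mul_I_im]
  rw [hre2, him2]
  have hpyth := Real.sin_sq_add_cos_sq r
  nlinarith [hpyth]

theorem music_noise_projection_single (ω x1 x2 z1 z2 : ℝ) (h : (x1, x2) ≠ (z1, z2)) :
    let nrm : ℝ := Real.sqrt ((x1 - z1) ^ 2 + (x2 - z2) ^ 2)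
    let a1 : ℝ := (x1 - z1) / nrm
    let a2 : ℝ := (x2 - z2) / nrm
    let ρ : ℝ := ω * nrm
    let P : ℝ → ℂ := fun t =>
      Complex.exp (Complex.I * (ω : ℂ) * ((x1 * Real.cos t + x2 * Real.sin t : ℝ) : ℂ)) -
        (((J0 ρ : ℝ) : ℂ) +
            2 * Complex.I * ((J1 ρ : ℝ) : ℂ) * ((a1 * Real.cos t + a2 * Real.sin t : ℝ) : ℂ)) *
          Complex.exp (Complex.I * (ω : ℂ) * ((z1 * Real.cos t + z2 * Real.sin t : ℝ) : ℂ))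
    (1 / (2 * Real.pi)) * ∫ t in (0 : ℝ)..(2 * Real.pi), (‖P t‖) ^ 2
      = 1 - (J0 ρ) ^ 2 - 2 * (J1 ρ) ^ 2 := by
  intro nrm a1 a2 ρ P
  have h' : ¬(x1 = z1 ∧ x2 = z2) := by simpa [Prod.ext_iff] using h
  have hpos : 0 < (x1 - z1)^2 + (x2 - z2)^2 := by
    rcases not_and_or.1 h' with hc | hc
    · have h0 : (x1 - z1) ≠ 0 := sub_ne_zero.2 hc
      positivity
    · have h0 : (x2 - z2) ≠ 0 := sub_ne_zero.2 hc
      positivity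
  have hnrm : 0 < nrm := Real.sqrt_pos.2 hpos
  have hnrm2 : nrm^2 = (x1 - z1)^2 + (x2 - z2)^2 := Real.sq_sqrt hpos.le
  have ha1 : a1 = (x1 - z1)/nrm := rfl
  have ha2 : a2 = (x2 - z2)/nrm := rfl
  have hρ : ρ = ω * nrm := rfl
  have h1 : nrm * a1 = x1 - z1 := by rw [ha1]; field_simp
  have h2 : nrm * a2 = x2 - z2 := by rw [ha2]; field_simp
  have hunit : a1^2 + a2^2 = 1 := by
    rw [ha1, ha2, div_pow, div_pow, ← add_div, div_eq_one_iff_eq (by positivity)]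
    exact hnrm2.symm
  -- direction angle
  set w : ℂ := (a1:ℂ) + (a2:ℂ)*Complex.I with hw
  have hn : Complex.normSq w = a1^2 + a2^2 := by
    simp only [hw, Complex.normSq_apply, Complex.add_re, Complex.ofReal_re, Complex.mul_re,
      Complex.I_re, Complex.ofReal_im, Complex.I_im, Complex.add_im, Complex.mul_im]
    ring
  have habsw : ‖w‖ = 1 := by
    rw [Complex.norm_def, hn, hunit, Real.sqrt_one]
  have hw0 : w ≠ 0 := by
    intro h0
    rw [h0] at habsw
    simp at habsw
  set φ : ℝ := Complex.arg w with hφ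
  have hcos : Real.cos φ = a1 := by
    rw [hφ, Complex.cos_arg hw0, habsw]
    simp [hw]
  have hsin : Real.sin φ = a2 := by
    rw [hφ, Complex.sin_arg, habsw]
    simp [hw]
  have hs : ∀ t : ℝ, a1 * Real.cos t + a2 * Real.sin t = Real.cos (t - φ) := by
    intro t
    rw [Real.cos_sub, hcos, hsin]
    ring
  have hpt : ∀ t : ℝ, ‖P t‖^2
      = 1 + (J0 ρ)^2 + 4*(J1 ρ)^2*(a1 * Real.cos t + a2 * Real.sin t)^2
        - 2*(J0 ρ)*Real.cos (ρ*(a1 * Real.cos t + a2 * Real.sin t))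
        - 4*(J1 ρ)*(a1 * Real.cos t + a2 * Real.sin t)
            * Real.sin (ρ*(a1 * Real.cos t + a2 * Real.sin t)) := by
    intro t
    exact pointwise_sq (J0 ρ) (J1 ρ) ω x1 x2 z1 z2 nrm a1 a2 h1 h2 t
  simp_rw [hpt, hs]
  have hper : Function.Periodic (fun t : ℝ =>
      1 + (J0 ρ)^2 + 4*(J1 ρ)^2*(Real.cos (t - φ))^2
        - 2*(J0 ρ)*Real.cos (ρ*(Real.cos (t - φ)))
        - 4*(J1 ρ)*(Real.cos (t - φ)) * Real.sin (ρ*(Real.cos (t - φ)))) (2*π) := by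
    intro u
    have e : u + 2*π - φ = (u - φ) + 2*π := by ring
    simp only [e, Real.cos_add_two_pi]
  have hshift := hper.intervalIntegral_add_eq 0 φ
  rw [zero_add] at hshift
  rw [hshift]
  have hcomp := intervalIntegral.integral_comp_sub_right (a := φ) (b := φ + 2*π)
    (fun u : ℝ => 1 + (J0 ρ)^2 + 4*(J1 ρ)^2*(Real.cos u)^2
        - 2*(J0 ρ)*Real.cos (ρ*(Real.cos u))
        - 4*(J1 ρ)*(Real.cos u) * Real.sin (ρ*(Real.cos u))) φ
  rw [sub_self, add_sub_cancel_left] at hcomp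
  rw [hcomp]
  -- now evaluate the integral
  have hIcos2 : ∫ u in (0:ℝ)..(2*π), (Real.cos u)^2 = π := by
    rw [integral_cos_sq]
    simp [Real.sin_two_pi, Real.cos_two_pi]
  have hsplit : (fun u : ℝ => 1 + (J0 ρ)^2 + 4*(J1 ρ)^2*(Real.cos u)^2
        - 2*(J0 ρ)*Real.cos (ρ*(Real.cos u))
        - 4*(J1 ρ)*(Real.cos u) * Real.sin (ρ*(Real.cos u)))
      = (fun u : ℝ => (1 + (J0 ρ)^2) + ((4*(J1 ρ)^2)*(Real.cos u)^2
          + ((-2*(J0 ρ))*Real.cos (ρ*(Real.cos u))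
            + (-4*(J1 ρ))*(Real.cos u * Real.sin (ρ*(Real.cos u)))))) := by
    funext u
    ring
  rw [hsplit]
  have ii1 : IntervalIntegrable (fun _ : ℝ => 1 + (J0 ρ)^2) volume 0 (2*π) :=
    intervalIntegrable_const
  have ii3 : IntervalIntegrable (fun x : ℝ => (4*(J1 ρ)^2)*(Real.cos x)^2) volume 0 (2*π) :=
    Continuous.intervalIntegrable (by fun_prop) _ _
  have ii5 : IntervalIntegrable (fun x : ℝ => (-2*(J0 ρ))*Real.cos (ρ*(Real.cos x)))
      volume 0 (2*π) := Continuous.intervalIntegrable (by fun_prop) _ _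
  have ii6 : IntervalIntegrable (fun x : ℝ => (-4*(J1 ρ))*(Real.cos x * Real.sin (ρ*(Real.cos x))))
      volume 0 (2*π) := Continuous.intervalIntegrable (by fun_prop) _ _
  have ii4 : IntervalIntegrable (fun x : ℝ => (-2*(J0 ρ))*Real.cos (ρ*(Real.cos x))
      + (-4*(J1 ρ))*(Real.cos x * Real.sin (ρ*(Real.cos x)))) volume 0 (2*π) := ii5.add ii6
  have ii2 : IntervalIntegrable (fun x : ℝ => (4*(J1 ρ)^2)*(Real.cos x)^2
      + ((-2*(J0 ρ))*Real.cos (ρ*(Real.cos x))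
        + (-4*(J1 ρ))*(Real.cos x * Real.sin (ρ*(Real.cos x))))) volume 0 (2*π) := ii3.add ii4
  rw [intervalIntegral.integral_add ii1 ii2, intervalIntegral.integral_add ii3 ii4,
    intervalIntegral.integral_add ii5 ii6, intervalIntegral.integral_const_mul,
    intervalIntegral.integral_const_mul, intervalIntegral.integral_const_mul,
    hIcos2, cos_part ρ, sin_part ρ, intervalIntegral.integral_const, smul_eq_mul]
  have hπ : (π:ℝ) ≠ 0 := Real.pi_ne_zero
  field_simp
  ring
end
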